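/- For any triangle-free graph G, φ(G) ≥ χ(G)/2 - 1. -/

import Mathlib

open SimpleGraph

noncomputable def chi {W : Type*} (G : SimpleGraph W) : ℕ := G.chromaticNumber.toNat

def IsProper {W : Type*} (G : SimpleGraph W) (c : W → ℕ) : Prop :=
  ∀ ⦃u v⦄, G.Adj u v → c u ≠ c v

noncomputable def disc {W : Type*} (G : SimpleGraph W) (c : W → ℕ) (s : Finset W) : ℕ :=
  (s.image c).card - chi (G.induce (s : Set W))

noncomputable def phiC {W : Type*} [Fintype W] (G : SimpleGraph W) (c : W → ℕ) : ℕ :=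
  Finset.univ.sup (disc G c)

noncomputable def phi {W : Type*} [Fintype W] (G : SimpleGraph W) : ℕ :=
  sInf {n | ∃ c, IsProper G c ∧ phiC G c = n}

open Classical in
noncomputable def phiHatC {W : Type*} [Fintype W] (G : SimpleGraph W) (c : W → ℕ) : ℕ :=
  Finset.univ.sup (fun s : Finset W =>
    if (G.induce (s : Set W)).Connected then disc G c s else 0)

noncomputable def phiHat {W : Type*} [Fintype W] (G : SimpleGraph W) : ℕ :=
  sInf {n | ∃ c, IsProper G c ∧ phiHatC G c = n}

open Classical in
noncomputable def indepNum' {W : Type*} [Fintype W] (G : SimpleGraph W) : ℕ :=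
  Finset.univ.sup fun s : Finset W =>
    if ∀ u ∈ s, ∀ v ∈ s, ¬ G.Adj u v then s.card else 0

open Classical in
noncomputable def cliqueNum' {W : Type*} [Fintype W] (G : SimpleGraph W) : ℕ :=
  Finset.univ.sup fun s : Finset W =>
    if G.IsClique (s : Set W) then s.card else 0


-- triangle-free graphs are (n/2 + 1)-colorable
private lemma tf_colorable_aux : ∀ (n : ℕ) {V : Type*} [Fintype V] (G : SimpleGraph V),
    Fintype.card V ≤ n → G.CliqueFree 3 → G.Colorable (Fintype.card V / 2 + 1) := by
  intro n
  induction n with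
  | zero =>
    intro V _ G h _
    have : IsEmpty V := Fintype.card_eq_zero_iff.mp (Nat.le_zero.mp h)
    exact ⟨Coloring.mk (fun _ => 0) (fun {u v} h => (this.false u).elim)⟩
  | succ n ih =>
    intro V _ G hcard hG
    classical
    by_cases hpair : ∃ u v : V, u ≠ v ∧ ¬ G.Adj u v
    · obtain ⟨u, v, huv, hnadj⟩ := hpair
      set s : Finset V := {u, v}ᶜ with hs
      have hcard2 : ({u, v} : Finset V).card = 2 := Finset.card_pair huv
      have hscard : s.card = Fintype.card V - 2 := by
        rw [hs, Finset.card_compl, hcard2]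
      have hV2 : 2 ≤ Fintype.card V := by
        have := Fintype.card_le_of_embedding ⟨fun b : Bool => if b then u else v, by
          intro a b hab; cases a <;> cases b <;> simp_all⟩
        simpa using this
      have hG' : (G.induce (↑s : Set V)).CliqueFree 3 :=
        CliqueFree.comap (Embedding.induce _).isContained hG
      have hcards : Fintype.card (↑s : Set V) = Fintype.card V - 2 := by
        simp [hscard]
      have hle : Fintype.card (↑s : Set V) ≤ n := by omega
      have hcol := ih (G.induce (↑s : Set V)) hle hG'
      obtain ⟨C⟩ := hcol
      set k := Fintype.card (↑s : Set V) / 2 + 1 with hk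
      have hmem : ∀ w : V, w ∉ (↑s : Set V) → w = u ∨ w = v := by
        intro w hw
        simp [hs] at hw
        tauto
      refine Colorable.mono ?_ ⟨Coloring.mk
        (fun w => if h : w ∈ (↑s : Set V) then (C ⟨w, h⟩).castSucc else Fin.last k) ?_⟩
      · have : k + 1 ≤ Fintype.card V / 2 + 1 := by
          rw [hk, hcards]; omega
        exact this
      · intro w1 w2 hadj
        by_cases h1 : w1 ∈ (↑s : Set V) <;> by_cases h2 : w2 ∈ (↑s : Set V)
        · simp only [dif_pos h1, dif_pos h2]
          have := C.valid (by exact hadj : (G.induce (↑s : Set V)).Adj ⟨w1, h1⟩ ⟨w2, h2⟩)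
          simpa [Fin.castSucc_inj] using this
        · simp only [dif_pos h1, dif_neg h2]
          exact fun h => (Fin.castSucc_lt_last _).ne h
        · simp only [dif_neg h1, dif_pos h2]
          exact fun h => (Fin.castSucc_lt_last _).ne h.symm
        · exfalso
          rcases hmem w1 h1 with rfl | rfl <;> rcases hmem w2 h2 with rfl | rfl
          · exact G.loopless.irrefl _ hadj
          · exact hnadj hadj
          · exact hnadj hadj.symm
          · exact G.loopless.irrefl _ hadj
    · -- all pairs adjacent : card ≤ 2
      push_neg at hpair
      have hcomplete : ∀ u v : V, u ≠ v → G.Adj u v := hpair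
      have hle2 : Fintype.card V ≤ 2 := by
        by_contra h
        push_neg at h
        obtain ⟨t, hts, htc⟩ := Finset.exists_subset_card_eq ((by rw [Finset.card_univ]; omega) :
          3 ≤ (Finset.univ : Finset V).card)
        exact hG ↑t ⟨fun a ha b hb hab => hcomplete a b hab, by simpa using htc⟩
      exact Colorable.mono (by omega) G.selfColoring.colorable

private lemma chi_le_of_colorable {W : Type*} {G : SimpleGraph W} {n : ℕ}
    (h : G.Colorable n) : chi G ≤ n := by
  have := h.chromaticNumber_le
  have h2 := ENat.toNat_le_toNat this (by simp)
  simpa [chi] using h2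

private lemma two_chi_le {V : Type*} [Fintype V] (G : SimpleGraph V) (hG : G.CliqueFree 3)
    (htf : G.Colorable (Fintype.card V / 2 + 1)) : 2 * chi G ≤ Fintype.card V + 2 := by
  have := chi_le_of_colorable htf
  omega


theorem stmt9 {V : Type*} [Fintype V] (G : SimpleGraph V) (hG : G.CliqueFree 3) :
    (chi G : ℝ) / 2 - 1 ≤ (phi G : ℝ) := by
  classical
  -- the set of phiC values is nonempty: injective colorings are proper
  have hne : {n | ∃ c, IsProper G c ∧ phiC G c = n}.Nonempty := by
    refine ⟨phiC G (fun v => (Fintype.equivFin V v : ℕ)), fun v => (Fintype.equivFin V v : ℕ), ?_, rfl⟩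
    intro u v hadj h
    exact G.ne_of_adj hadj (by
      have : Fintype.equivFin V u = Fintype.equivFin V v := Fin.val_injective h
      exact (Fintype.equivFin V).injective this)
  obtain ⟨c, hc, hphic⟩ : ∃ c, IsProper G c ∧ phiC G c = phi G := Nat.sInf_mem hne
  set m := (Finset.univ.image c).card with hm
  -- chi G ≤ m
  have hchi_m : chi G ≤ m := by
    have C : G.Coloring ↥(Finset.univ.image c) :=
      Coloring.mk (fun v => ⟨c v, Finset.mem_image_of_mem c (Finset.mem_univ v)⟩)
        (fun {u v} hadj h => hc hadj (congrArg Subtype.val h))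
    have := C.colorable
    rw [Fintype.card_coe] at this
    exact chi_le_of_colorable this
  -- rainbow set R
  have hex : ∀ a ∈ Finset.univ.image c, ∃ v, c v = a := by
    intro a ha
    obtain ⟨v, _, hv⟩ := Finset.mem_image.mp ha
    exact ⟨v, hv⟩
  set R : Finset V := (Finset.univ.image c).attach.image
    (fun a => (hex a.1 a.2).choose) with hR
  have hcR : ∀ a : {x // x ∈ Finset.univ.image c}, c ((hex a.1 a.2).choose) = a.1 :=
    fun a => (hex a.1 a.2).choose_spec
  have hRcard : R.card = m := by
    rw [hR, Finset.card_image_of_injOn, Finset.card_attach]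
    intro a _ b _ hab
    exact Subtype.ext ((hcR a).symm.trans ((congrArg c hab).trans (hcR b)))
  have hRimage : R.image c = Finset.univ.image c := by
    apply Finset.Subset.antisymm
    · intro b hb
      obtain ⟨v, hv, rfl⟩ := Finset.mem_image.mp hb
      exact Finset.mem_image_of_mem c (Finset.mem_univ v)
    · intro a ha
      rw [hR, Finset.image_image]
      refine Finset.mem_image.mpr ⟨⟨a, ha⟩, Finset.mem_attach _ _, ?_⟩
      exact hcR ⟨a, ha⟩
  -- disc bound
  have hdisc : disc G c R ≤ phi G := by
    rw [← hphic]
    exact Finset.le_sup (Finset.mem_univ R)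
  -- chromatic bound on induced subgraph
  have hGR : (G.induce (↑R : Set V)).CliqueFree 3 := CliqueFree.comap (Embedding.induce _).isContained hG
  have hcardR : Fintype.card (↑R : Set V) = m := by
    rw [← hRcard]
    simp [Finset.coe_sort_coe]
  have h2chiR : 2 * chi (G.induce (↑R : Set V)) ≤ m + 2 := by
    have hcol := tf_colorable_aux (Fintype.card (↑R : Set V)) (G.induce (↑R : Set V)) le_rfl hGR
    have := two_chi_le _ hGR hcol
    rwa [hcardR] at this
  have hdisc' : m - chi (G.induce (↑R : Set V)) ≤ phi G := by
    have : disc G c R = m - chi (G.induce (↑R : Set V)) := by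
      rw [disc, hRimage]
    rwa [this] at hdisc
  -- m ≤ chi(R) + phi, so 2m ≤ 2 phi + m + 2, m ≤ 2 phi + 2, chi ≤ 2 phi + 2
  have hfinal : chi G ≤ 2 * phi G + 2 := by omega
  have := (Nat.cast_le (α := ℝ)).mpr hfinal
  push_cast at this
  linarith
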